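/- Let T be a finite multiset of D nonzero complex numbers all of modulus in [c·h, h] for some 0 < c ≤ 1 and h > 0, and suppose that for some index set 𝒟 ⊆ {0,1,...,D} containing 0 and D, with |𝒟| = Λ + 1, we have |S_j(T)| ≤ δ h^j for all j ∉ 𝒟, 0 ≤ j ≤ D. Then, for δ and ε sufficiently small depending only on D, c, and 𝒟: for any w ∈ T, the ball B(w, ε h) contains at most Λ elements of T (counted with multiplicity). -/

import Mathlib

/-- The `j`-th elementary symmetric function of the (negated) elements of a multiset. -/
noncomputable def S (A : Multiset ℂ) (j : ℕ) : ℂ :=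
  ((Multiset.powersetCard j (A.map (fun z => -z))).map Multiset.prod).sum

open Polynomial in
/-- Every real polynomial of `natDegree ≤ Λ` is a combination of `descPochhammer`s. -/
lemma span_descPochhammer (Λ : ℕ) : ∀ (p : Polynomial ℝ), p.natDegree ≤ Λ →
    ∃ d : ℕ → ℝ, p = ∑ i ∈ Finset.range (Λ + 1), d i • descPochhammer ℝ i := by
  induction Λ with
  | zero =>
    intro p hp
    refine ⟨fun _ => p.coeff 0, ?_⟩
    rw [Polynomial.eq_C_of_natDegree_le_zero hp]
    simp [descPochhammer_zero, Polynomial.smul_eq_C_mul]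
  | succ Λ ih =>
    intro p hp
    set q := p - (p.coeff (Λ + 1)) • descPochhammer ℝ (Λ + 1) with hq
    have hmono : (descPochhammer ℝ (Λ + 1)).Monic := monic_descPochhammer ℝ (Λ + 1)
    have hdeg : (descPochhammer ℝ (Λ + 1)).natDegree = Λ + 1 := descPochhammer_natDegree ℝ (Λ + 1)
    have hlead : (descPochhammer ℝ (Λ + 1)).coeff (Λ + 1) = 1 := by
      have := hmono.coeff_natDegree
      rwa [hdeg] at this
    have hqd : q.natDegree ≤ Λ := by
      refine Polynomial.natDegree_le_iff_coeff_eq_zero.2 fun m hm => ?_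
      rcases eq_or_lt_of_le (Nat.succ_le_of_lt hm) with h | h
      · have hm' : m = Λ + 1 := h.symm
        subst hm'
        simp [hq, hlead]
      · have h1 : p.coeff m = 0 := Polynomial.coeff_eq_zero_of_natDegree_lt (lt_of_le_of_lt hp h)
        have h2 : (descPochhammer ℝ (Λ + 1)).coeff m = 0 :=
          Polynomial.coeff_eq_zero_of_natDegree_lt (by rw [hdeg]; exact h)
        simp [hq, h1, h2]
    obtain ⟨d, hd⟩ := ih q hqd
    refine ⟨fun i => if i = Λ + 1 then p.coeff (Λ + 1) else d i, ?_⟩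
    rw [Finset.sum_range_succ]
    have : ∑ i ∈ Finset.range (Λ + 1),
        (if i = Λ + 1 then p.coeff (Λ + 1) else d i) • descPochhammer ℝ i
        = ∑ i ∈ Finset.range (Λ + 1), d i • descPochhammer ℝ i := by
      refine Finset.sum_congr rfl fun i hi => ?_
      have := Finset.mem_range.1 hi
      rw [if_neg (by omega : i ≠ Λ + 1)]
    rw [this, ← hd]
    simp [hq]

/-- Discrete interpolation in the binomial basis: there are coefficients `c i` such that
`∑ i ≤ Λ, c i * C(D - j, i)` is `1` at `j = 0` and `0` at the other `j ∈ 𝒟`. -/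
lemma exists_binom_interp (D Λ : ℕ) (𝒟 : Finset ℕ)
    (h𝒟 : 𝒟 ⊆ Finset.range (D + 1)) (hcard : 𝒟.card = Λ + 1) :
    ∃ c : ℕ → ℝ, ∀ j ∈ 𝒟,
      ∑ i ∈ Finset.range (Λ + 1), c i * ((D - j).choose i : ℝ)
        = if j = 0 then 1 else 0 := by
  classical
  set v : ℕ → ℝ := fun j => ((D - j : ℕ) : ℝ) with hv
  have hinj : Set.InjOn v 𝒟 := by
    intro a ha b hb hab
    have ha' : a ≤ D := Nat.lt_succ_iff.1 (Finset.mem_range.1 (h𝒟 ha))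
    have hb' : b ≤ D := Nat.lt_succ_iff.1 (Finset.mem_range.1 (h𝒟 hb))
    have : (D - a : ℕ) = (D - b : ℕ) := Nat.cast_injective hab
    omega
  set r : ℕ → ℝ := fun j => if j = 0 then 1 else 0 with hr
  set p : Polynomial ℝ := Lagrange.interpolate 𝒟 v r with hp
  have hdeg : p.natDegree ≤ Λ := by
    rcases eq_or_ne p 0 with h0 | h0
    · simp [h0]
    · have := Lagrange.degree_interpolate_lt (r := r) hinj
      rw [← hp, hcard] at this
      have h2 := (Polynomial.natDegree_lt_iff_degree_lt h0).2
        (lt_of_lt_of_le this (by exact_mod_cast le_refl ((Λ:WithBot ℕ) + 1)))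
      omega
  obtain ⟨d, hd⟩ := span_descPochhammer Λ p hdeg
  refine ⟨fun i => d i * (i.factorial : ℝ), fun j hj => ?_⟩
  have heval : p.eval (v j) = r j := Lagrange.eval_interpolate_at_node (r := r) hinj hj
  rw [hd] at heval
  have hrj : r j = if j = 0 then 1 else 0 := rfl
  rw [← hrj, ← heval]
  rw [Polynomial.eval_finset_sum]
  refine Finset.sum_congr rfl fun i _ => ?_
  rw [Polynomial.eval_smul, smul_eq_mul, hv]
  rw [descPochhammer_eval_eq_descFactorial]
  rw [Nat.descFactorial_eq_factorial_mul_choose]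
  push_cast
  ring

lemma multiset_abs_prod_le (b : ℝ) (hb : 0 ≤ b) :
    ∀ (U : Multiset ℂ), (∀ y ∈ U, ‖y‖ ≤ b) →
      ‖U.prod‖ ≤ b ^ (Multiset.card U) := by
  intro U
  induction U using Multiset.induction_on with
  | empty => simp
  | cons a u ih =>
    intro hU
    rw [Multiset.prod_cons, Multiset.card_cons, norm_mul, pow_succ']
    exact mul_le_mul (hU a (Multiset.mem_cons_self a u))
      (ih fun y hy => hU y (Multiset.mem_cons_of_mem hy))
      (norm_nonneg _) hb

open scoped Classical in
/-- If at least `Λ + 1` elements of `T'` are small, then every elementary symmetric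
function of order `D - i`, `i ≤ Λ`, is small. -/
lemma E_bound (T' : Multiset ℂ) (D Λ i : ℕ) (hcard : Multiset.card T' = D)
    (ε h : ℝ) (hh : 0 < h) (hε : 0 < ε)
    (hB : ∀ y ∈ T', ‖y‖ ≤ 2 * h)
    (hcl : Λ + 1 ≤ Multiset.countP (fun y => ‖y‖ < ε * h) T')
    (hi : i ≤ Λ) (hΛD : Λ + 1 ≤ D) :
    ‖((Multiset.powersetCard (D - i) T').map Multiset.prod).sum‖
      ≤ (D.choose (D - i) : ℝ) * (ε * h * (2 * h) ^ (D - i - 1)) := by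
  have bnn : (0:ℝ) ≤ ε * h * (2 * h) ^ (D - i - 1) := by positivity
  calc ‖((Multiset.powersetCard (D - i) T').map Multiset.prod).sum‖
      ≤ (((Multiset.powersetCard (D - i) T').map Multiset.prod).map (fun x => ‖x‖)).sum := by
        simpa using
          norm_multiset_sum_le ((Multiset.powersetCard (D - i) T').map Multiset.prod)
    _ ≤ (Multiset.card (((Multiset.powersetCard (D - i) T').map Multiset.prod).map (fun x => ‖x‖)))
          • (ε * h * (2 * h) ^ (D - i - 1)) := by
        apply Multiset.sum_le_card_nsmul
        intro x hx
        rw [Multiset.mem_map] at hx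
        obtain ⟨p, hp, rfl⟩ := hx
        rw [Multiset.mem_map] at hp
        obtain ⟨U, hU, rfl⟩ := hp
        rw [Multiset.mem_powersetCard] at hU
        obtain ⟨hUle, hUcard⟩ := hU
        have hsplit : Multiset.countP (fun y => ‖y‖ < ε * h) T'
            = Multiset.countP (fun y => ‖y‖ < ε * h) (T' - U)
              + Multiset.countP (fun y => ‖y‖ < ε * h) U := by
          rw [← Multiset.countP_add, tsub_add_cancel_of_le hUle]
        have h1 : Multiset.countP (fun y => ‖y‖ < ε * h) (T' - U) ≤ i := by
          calc Multiset.countP (fun y => ‖y‖ < ε * h) (T' - U)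
              ≤ Multiset.card (T' - U) := Multiset.countP_le_card _ _
            _ = i := by rw [Multiset.card_sub hUle, hcard, hUcard]; omega
        have h2 : 0 < Multiset.countP (fun y => ‖y‖ < ε * h) U := by omega
        obtain ⟨y, hyU, hy⟩ := Multiset.countP_pos.1 h2
        obtain ⟨U', rfl⟩ := Multiset.exists_cons_of_mem hyU
        rw [Multiset.prod_cons, norm_mul]
        have hcU' : Multiset.card U' = D - i - 1 := by
          have := hUcard; rw [Multiset.card_cons] at this; omega
        have hU'b : ‖U'.prod‖ ≤ (2 * h) ^ (D - i - 1) := by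
          rw [← hcU']
          exact multiset_abs_prod_le (2 * h) (by linarith) U'
            (fun z hz => hB z (Multiset.mem_of_le hUle (Multiset.mem_cons_of_mem hz)))
        exact mul_le_mul (le_of_lt hy) hU'b (norm_nonneg _)
          (le_of_lt (by positivity))
    _ = (D.choose (D - i) : ℝ) * (ε * h * (2 * h) ^ (D - i - 1)) := by
        rw [Multiset.card_map, Multiset.card_map, Multiset.card_powersetCard, hcard,
          nsmul_eq_mul]

open Polynomial in
lemma key_identity (P : Polynomial ℂ) (D i : ℕ) (hP : P.natDegree ≤ D) (w : ℂ) :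
    w ^ i * (Polynomial.taylor w P).coeff i
      = ∑ k ∈ Finset.range (D + 1), (k.choose i : ℂ) * P.coeff k * w ^ k := by
  set f : ℕ → ℂ := fun k => (k.choose i : ℂ) * P.coeff k * w ^ k with hf
  have hd : (Polynomial.hasseDeriv i P).natDegree < D + 1 :=
    lt_of_le_of_lt (le_trans (Polynomial.natDegree_hasseDeriv_le P i)
      (le_trans (Nat.sub_le _ _) hP)) (Nat.lt_succ_self D)
  rw [Polynomial.taylor_coeff, Polynomial.eval_eq_sum_range' hd w, Finset.mul_sum]
  have lhs_eq : ∀ n ∈ Finset.range (D + 1),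
      w ^ i * ((Polynomial.hasseDeriv i P).coeff n * w ^ n) = f (i + n) := by
    intro n _
    rw [Polynomial.hasseDeriv_coeff, hf]
    simp only [Nat.add_comm n i]
    ring
  rw [Finset.sum_congr rfl lhs_eq]
  have e1 : ∑ n ∈ Finset.range (D + 1), f (i + n) = ∑ k ∈ Finset.Ico i (D + 1 + i), f k := by
    rw [Finset.sum_Ico_eq_sum_range, Nat.add_sub_cancel]
  rw [e1]
  have e2 : ∑ k ∈ Finset.Ico i (D + 1 + i), f k = ∑ k ∈ Finset.range (D + 1 + i), f k := by
    apply Finset.sum_subset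
    · intro k hk
      rw [Finset.mem_Ico] at hk
      exact Finset.mem_range.2 hk.2
    · intro k hk1 hk2
      rw [Finset.mem_range] at hk1
      rw [Finset.mem_Ico] at hk2
      have : k < i := by omega
      simp [hf, Nat.choose_eq_zero_of_lt this]
  have e3 : ∑ k ∈ Finset.range (D + 1), f k = ∑ k ∈ Finset.range (D + 1 + i), f k := by
    apply Finset.sum_subset
    · exact Finset.range_subset_range.2 (by omega)
    · intro k hk1 hk2
      rw [Finset.mem_range] at hk1 hk2
      have : P.coeff k = 0 := Polynomial.coeff_eq_zero_of_natDegree_lt (by omega)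
      simp [hf, this]
  rw [e2, ← e3]


open scoped Classical in
/-- Single-tier clustering theorem: let `T` be a multiset of `D` nonzero complex
numbers of modulus in `[c·h, h]`, and suppose `|S_j(T)| ≤ δ h^j` for all
`j ∉ 𝒟 ⊆ {0,...,D}` with `0, D ∈ 𝒟` and `|𝒟| = Λ + 1`. Then for `δ, ε` small
enough depending only on `D`, `c`, `𝒟`, every ball `B(w, εh)` about `w ∈ T`
contains at most `Λ` elements of `T` (with multiplicity). -/
theorem stmt16 (D Λ : ℕ) (c : ℝ) (𝒟 : Finset ℕ)
    (hc0 : 0 < c) (hc1 : c ≤ 1)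
    (h𝒟 : 𝒟 ⊆ Finset.range (D + 1)) (h0 : 0 ∈ 𝒟) (hD : D ∈ 𝒟)
    (hcard : 𝒟.card = Λ + 1) :
    ∃ δ : ℝ, 0 < δ ∧ ∃ ε : ℝ, 0 < ε ∧
      ∀ (T : Multiset ℂ) (h : ℝ), 0 < h → Multiset.card T = D →
        (∀ z ∈ T, z ≠ 0 ∧ c * h ≤ ‖z‖ ∧ ‖z‖ ≤ h) →
        (∀ j, j ≤ D → j ∉ 𝒟 → ‖S T j‖ ≤ δ * h ^ j) →
        ∀ w ∈ T,
          Multiset.card (T.filter (fun z => ‖z - w‖ < ε * h)) ≤ Λ := by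
  classical
  obtain ⟨cc, hcc⟩ := exists_binom_interp D Λ 𝒟 h𝒟 hcard
  set g : ℕ → ℝ := fun k => ∑ i ∈ Finset.range (Λ + 1), cc i * (k.choose i : ℝ) with hg
  set A : ℝ := ∑ i ∈ Finset.range (Λ + 1), |cc i| * (D.choose (D - i) : ℝ) * 2 ^ D with hA
  set B : ℝ := ∑ k ∈ Finset.range (D + 1), |g k| with hB
  have hA0 : 0 ≤ A := Finset.sum_nonneg fun i _ => by positivity
  have hB0 : 0 ≤ B := Finset.sum_nonneg fun k _ => abs_nonneg _
  have hcD : (0:ℝ) < c ^ D := pow_pos hc0 D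
  set δ : ℝ := c ^ D / (2 * (B + 1)) with hδ
  set ε : ℝ := c ^ D / (2 * (A + 1)) with hε
  have hδ0 : 0 < δ := by positivity
  have hε0 : 0 < ε := by positivity
  refine ⟨δ, hδ0, ε, hε0, ?_⟩
  intro T h hh hTcard hT hS w hw
  by_contra hcon
  push_neg at hcon
  have hcon' : Λ + 1 ≤ Multiset.card (T.filter (fun z => ‖z - w‖ < ε * h)) := hcon
  -- basic facts
  obtain ⟨-, hwlo, hwhi⟩ := hT w hw
  have hΛD : Λ + 1 ≤ D := le_trans hcon' (by
    rw [← hTcard]; exact Multiset.card_le_card (Multiset.filter_le _ _))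
  set T' : Multiset ℂ := T.map (fun z => w - z) with hT'
  have hT'card : Multiset.card T' = D := by rw [hT', Multiset.card_map, hTcard]
  have hcl : Λ + 1 ≤ Multiset.countP (fun y => ‖y‖ < ε * h) T' := by
    rw [hT', Multiset.countP_map]
    refine le_trans hcon' (le_of_eq ?_)
    congr 1
    exact Multiset.filter_congr fun z _ => by rw [norm_sub_rev]
  have hT'bound : ∀ y ∈ T', ‖y‖ ≤ 2 * h := by
    intro y hy
    rw [hT', Multiset.mem_map] at hy
    obtain ⟨z, hz, rfl⟩ := hy
    obtain ⟨-, -, hzh⟩ := hT z hz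
    calc ‖w - z‖ ≤ ‖w‖ + ‖z‖ := by
          simpa [sub_eq_add_neg] using norm_add_le w (-z)
      _ ≤ 2 * h := by linarith
  -- the polynomial
  set P : Polynomial ℂ := ((T.map (fun z => -z)).map
    (fun a => Polynomial.X + Polynomial.C a)).prod with hP
  have hPdeg : P.natDegree = D := by
    rw [hP, Polynomial.natDegree_multiset_prod_of_monic]
    · rw [Multiset.map_map, Multiset.map_map]
      have h1 : Multiset.map ((Polynomial.natDegree ∘ fun a => Polynomial.X + Polynomial.C a)
            ∘ fun z : ℂ => -z) T = Multiset.map (fun _ : ℂ => 1) T :=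
        Multiset.map_congr rfl fun z _ => Polynomial.natDegree_X_add_C (-z)
      rw [h1, Multiset.map_const', Multiset.sum_replicate, hTcard, smul_eq_mul, mul_one]
    · intro f hf
      rw [Multiset.mem_map] at hf
      obtain ⟨a, -, rfl⟩ := hf
      exact Polynomial.monic_X_add_C a
  have hcoeff : ∀ k, k ≤ D → P.coeff k = S T (D - k) := by
    intro k hk
    rw [hP, Multiset.prod_X_add_C_coeff (T.map fun z => -z)
      (by rw [Multiset.card_map, hTcard]; exact hk)]
    rw [Multiset.card_map, hTcard]
    rfl
  have hPD : P.coeff D = 1 := by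
    rw [hcoeff D le_rfl]
    show ((Multiset.powersetCard (D - D) (T.map fun z => -z)).map Multiset.prod).sum = 1
    simp
  -- Taylor expansion around w
  have htaylor : Polynomial.taylor w P = (T'.map (fun a => Polynomial.X + Polynomial.C a)).prod := by
    have h1 : Polynomial.taylor w P = Polynomial.taylorAlgHom w P := rfl
    rw [h1, hP, map_multiset_prod, Multiset.map_map, Multiset.map_map, hT', Multiset.map_map]
    congr 1
    refine Multiset.map_congr rfl fun z _ => ?_
    show Polynomial.taylor w (Polynomial.X + Polynomial.C (-z)) = _
    rw [map_add, Polynomial.taylor_X, Polynomial.taylor_C]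
    rw [add_assoc, ← Polynomial.C_add]
    simp [sub_eq_add_neg]
  have hEcoeff : ∀ i, i ≤ Λ → (Polynomial.taylor w P).coeff i
      = ((Multiset.powersetCard (D - i) T').map Multiset.prod).sum := by
    intro i hi
    rw [htaylor, Multiset.prod_X_add_C_coeff T' (by rw [hT'card]; omega), hT'card]
    rfl
  have hEb : ∀ i, i ≤ Λ → ‖(Polynomial.taylor w P).coeff i‖
      ≤ (D.choose (D - i) : ℝ) * (ε * h * (2 * h) ^ (D - i - 1)) := by
    intro i hi
    rw [hEcoeff i hi]
    exact E_bound T' D Λ i hT'card ε h hh hε0 hT'bound hcl hi hΛD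
  -- the key algebraic combination
  set G : ℂ := ∑ i ∈ Finset.range (Λ + 1),
    (cc i : ℂ) * (w ^ i * (Polynomial.taylor w P).coeff i) with hG
  have hGeq : G = ∑ k ∈ Finset.range (D + 1), (g k : ℂ) * (P.coeff k * w ^ k) := by
    rw [hG]
    have : ∀ i ∈ Finset.range (Λ + 1),
        (cc i : ℂ) * (w ^ i * (Polynomial.taylor w P).coeff i)
          = ∑ k ∈ Finset.range (D + 1), (cc i : ℂ) * ((k.choose i : ℂ) * P.coeff k * w ^ k) := by
      intro i _
      rw [key_identity P D i hPdeg.le w, Finset.mul_sum]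
    rw [Finset.sum_congr rfl this, Finset.sum_comm]
    refine Finset.sum_congr rfl fun k _ => ?_
    rw [hg]
    push_cast
    rw [Finset.sum_mul]
    refine Finset.sum_congr rfl fun i _ => by ring
  -- split off the 𝒟 part
  have hgD : (g D : ℝ) = 1 := by
    have := hcc 0 h0
    simpa [hg] using this
  have hgk0 : ∀ k, k ≤ D → k ≠ D → (D - k) ∈ 𝒟 → g k = 0 := by
    intro k hk hkD hmem
    have hj0 : D - k ≠ 0 := by omega
    have := hcc (D - k) hmem
    rw [if_neg hj0] at this
    rw [hg]
    have hDk : D - (D - k) = k := by omega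
    rw [← this, hDk]
  have hsplit : G = P.coeff D * w ^ D
      + ∑ k ∈ (Finset.range (D + 1)).filter (fun k => (D - k) ∉ 𝒟),
          (g k : ℂ) * (P.coeff k * w ^ k) := by
    rw [hGeq, ← Finset.sum_filter_add_sum_filter_not (Finset.range (D + 1))
      (fun k => (D - k) ∈ 𝒟)]
    congr 1
    rw [Finset.sum_eq_single_of_mem D]
    · rw [show ((g D : ℝ) : ℂ) = 1 by rw [hgD]; norm_num, one_mul]
    · rw [Finset.mem_filter, Finset.mem_range]
      exact ⟨by omega, by simpa using h0⟩
    · intro k hk hkD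
      rw [Finset.mem_filter, Finset.mem_range] at hk
      rw [hgk0 k (by omega) hkD hk.2]
      norm_num
  -- bounds
  have hwD : (c * h) ^ D ≤ ‖w ^ D‖ := by
    rw [norm_pow]
    exact pow_le_pow_left₀ (by positivity) hwlo D
  have hGbound : ‖G‖ ≤ A * (ε * h ^ D) := by
    rw [hG]
    calc ‖∑ i ∈ Finset.range (Λ + 1),
          (cc i : ℂ) * (w ^ i * (Polynomial.taylor w P).coeff i)‖
        ≤ ∑ i ∈ Finset.range (Λ + 1),
          ‖(cc i : ℂ) * (w ^ i * (Polynomial.taylor w P).coeff i)‖ :=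
          norm_sum_le _ _
      _ ≤ ∑ i ∈ Finset.range (Λ + 1),
          |cc i| * (D.choose (D - i) : ℝ) * 2 ^ D * (ε * h ^ D) := by
          refine Finset.sum_le_sum fun i hi => ?_
          have hiΛ : i ≤ Λ := by have := Finset.mem_range.1 hi; omega
          rw [norm_mul, norm_mul, Complex.norm_real, Real.norm_eq_abs, norm_pow]
          have h1 : ‖w‖ ^ i ≤ h ^ i :=
            pow_le_pow_left₀ (norm_nonneg _) hwhi i
          have h2 := hEb i hiΛ
          have h3 : ‖w‖ ^ i * ‖(Polynomial.taylor w P).coeff i‖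
              ≤ h ^ i * ((D.choose (D - i) : ℝ) * (ε * h * (2 * h) ^ (D - i - 1))) := by
            exact mul_le_mul h1 h2 (norm_nonneg _) (by positivity)
          calc |cc i| * (‖w‖ ^ i * ‖(Polynomial.taylor w P).coeff i‖)
              ≤ |cc i| * (h ^ i * ((D.choose (D - i) : ℝ) * (ε * h * (2 * h) ^ (D - i - 1)))) :=
                mul_le_mul_of_nonneg_left h3 (abs_nonneg _)
            _ ≤ |cc i| * (D.choose (D - i) : ℝ) * 2 ^ D * (ε * h ^ D) := by
                have hpow : h ^ i * (ε * h * (2 * h) ^ (D - i - 1))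
                    ≤ 2 ^ D * (ε * h ^ D) := by
                  rw [mul_pow]
                  have hexp : h ^ i * h * h ^ (D - i - 1) = h ^ D := by
                    rw [← pow_succ, ← pow_add]
                    congr 1
                    omega
                  have h2pow : (2:ℝ) ^ (D - i - 1) ≤ 2 ^ D :=
                    pow_le_pow_right₀ one_le_two (by omega)
                  calc h ^ i * (ε * h * (2 ^ (D - i - 1) * h ^ (D - i - 1)))
                      = (2:ℝ) ^ (D - i - 1) * (ε * (h ^ i * h * h ^ (D - i - 1))) := by ring
                    _ = (2:ℝ) ^ (D - i - 1) * (ε * h ^ D) := by rw [hexp]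
                    _ ≤ 2 ^ D * (ε * h ^ D) := by
                        exact mul_le_mul_of_nonneg_right h2pow (by positivity)
                calc |cc i| * (h ^ i * ((D.choose (D - i) : ℝ) * (ε * h * (2 * h) ^ (D - i - 1))))
                    = |cc i| * (D.choose (D - i) : ℝ) * (h ^ i * (ε * h * (2 * h) ^ (D - i - 1))) := by
                      ring
                  _ ≤ |cc i| * (D.choose (D - i) : ℝ) * (2 ^ D * (ε * h ^ D)) := by
                      exact mul_le_mul_of_nonneg_left hpow (by positivity)
                  _ = |cc i| * (D.choose (D - i) : ℝ) * 2 ^ D * (ε * h ^ D) := by ring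
      _ = A * (ε * h ^ D) := by rw [hA, Finset.sum_mul]
  have hRbound : ‖∑ k ∈ (Finset.range (D + 1)).filter (fun k => (D - k) ∉ 𝒟),
      (g k : ℂ) * (P.coeff k * w ^ k)‖ ≤ B * (δ * h ^ D) := by
    calc ‖∑ k ∈ (Finset.range (D + 1)).filter (fun k => (D - k) ∉ 𝒟),
          (g k : ℂ) * (P.coeff k * w ^ k)‖
        ≤ ∑ k ∈ (Finset.range (D + 1)).filter (fun k => (D - k) ∉ 𝒟),
          ‖(g k : ℂ) * (P.coeff k * w ^ k)‖ := norm_sum_le _ _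
      _ ≤ ∑ k ∈ (Finset.range (D + 1)).filter (fun k => (D - k) ∉ 𝒟),
          |g k| * (δ * h ^ D) := by
          refine Finset.sum_le_sum fun k hk => ?_
          rw [Finset.mem_filter, Finset.mem_range] at hk
          obtain ⟨hk1, hk2⟩ := hk
          have hkD : k ≤ D := by omega
          rw [norm_mul, norm_mul, Complex.norm_real, Real.norm_eq_abs, norm_pow]
          have hs : ‖P.coeff k‖ ≤ δ * h ^ (D - k) := by
            rw [hcoeff k hkD]
            exact hS (D - k) (by omega) hk2
          have hwk : ‖w‖ ^ k ≤ h ^ k :=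
            pow_le_pow_left₀ (norm_nonneg _) hwhi k
          have : ‖P.coeff k‖ * ‖w‖ ^ k ≤ δ * h ^ (D - k) * h ^ k :=
            mul_le_mul hs hwk (by positivity) (by positivity)
          have hDk : h ^ (D - k) * h ^ k = h ^ D := by
            rw [← pow_add]; congr 1; omega
          calc |g k| * (‖P.coeff k‖ * ‖w‖ ^ k)
              ≤ |g k| * (δ * h ^ (D - k) * h ^ k) := mul_le_mul_of_nonneg_left this (abs_nonneg _)
            _ = |g k| * (δ * h ^ D) := by rw [mul_assoc δ, hDk]
      _ ≤ ∑ k ∈ Finset.range (D + 1), |g k| * (δ * h ^ D) := by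
          refine Finset.sum_le_sum_of_subset_of_nonneg (Finset.filter_subset _ _)
            fun k _ _ => by positivity
      _ = B * (δ * h ^ D) := by rw [hB, Finset.sum_mul]
  -- combine
  have hkey : (c * h) ^ D ≤ A * (ε * h ^ D) + B * (δ * h ^ D) := by
    calc (c * h) ^ D ≤ ‖w ^ D‖ := hwD
      _ = ‖G - ∑ k ∈ (Finset.range (D + 1)).filter (fun k => (D - k) ∉ 𝒟),
            (g k : ℂ) * (P.coeff k * w ^ k)‖ := by
          rw [hsplit, hPD, one_mul, add_sub_cancel_right]
      _ ≤ ‖G‖ + ‖∑ k ∈ (Finset.range (D + 1)).filter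
            (fun k => (D - k) ∉ 𝒟), (g k : ℂ) * (P.coeff k * w ^ k)‖ := by
          simpa using norm_sub_le G _
      _ ≤ A * (ε * h ^ D) + B * (δ * h ^ D) := add_le_add hGbound hRbound
  have hhD : (0:ℝ) < h ^ D := pow_pos hh D
  rw [mul_pow] at hkey
  have hc2 : c ^ D ≤ A * ε + B * δ := by
    have := le_of_mul_le_mul_right (by linarith [hkey] : c ^ D * h ^ D ≤ (A * ε + B * δ) * h ^ D) hhD
    exact this
  have hAe : A * ε < c ^ D / 2 := by
    rw [hε, mul_div_assoc', div_lt_div_iff₀ (by positivity) (by norm_num : (0:ℝ) < 2)]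
    linarith [hcD]
  have hBd : B * δ < c ^ D / 2 := by
    rw [hδ, mul_div_assoc', div_lt_div_iff₀ (by positivity) (by norm_num : (0:ℝ) < 2)]
    linarith [hcD]
  linarith
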